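/- There exist nonempty compact convex sets A₁, A₂, A₃ ⊆ ℝ³ and nonnegative real numbers V_I indexed by multi-indices I = (i₁,i₂,i₃) ∈ ℤ≥0³ with i₁+i₂+i₃ = 3, such that for all λ₁, λ₂, λ₃ ≥ 0 the Lebesgue measure of λ₁•A₁ + λ₂•A₂ + λ₃•A₃ equals Σ_{i₁+i₂+i₃=3} (3!/(i₁! i₂! i₃!)) · V_{(i₁,i₂,i₃)} · λ₁^{i₁} λ₂^{i₂} λ₃^{i₃}, and such that V_{(1,1,1)}³ < V_{(2,1,0)} · V_{(0,2,1)} · V_{(1,0,2)}. (In mixed-volume notation: V(A₁,A₂,A₃)³ < V(A₁,A₁,A₂)·V(A₂,A₂,A₃)·V(A₃,A₃,A₁), giving a negative answer to Gromov's question of whether I ↦ log V_I is concave on the discrete simplex.) -/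

import Mathlib

open Pointwise MeasureTheory

private lemma pi_add_pi (S T : Fin 3 → Set ℝ) :
    Set.pi Set.univ S + Set.pi Set.univ T = Set.pi Set.univ (fun i => S i + T i) := by
  ext x
  constructor
  · rintro ⟨a, ha, b, hb, rfl⟩ i -
    exact ⟨a i, ha i trivial, b i, hb i trivial, rfl⟩
  · intro hx
    choose a ha b hb hab using fun i => hx i trivial
    exact ⟨a, fun i _ => ha i, b, fun i _ => hb i, funext hab⟩

private lemma smul_pi' (l : ℝ) (S : Fin 3 → Set ℝ) :
    l • Set.pi Set.univ S = Set.pi Set.univ (fun i => l • S i) := by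
  ext x
  constructor
  · rintro ⟨y, hy, rfl⟩ i -
    exact ⟨y i, hy i trivial, rfl⟩
  · intro hx
    choose y hy hly using fun i => hx i trivial
    exact ⟨y, fun i _ => hy i, funext hly⟩

private lemma smul_Icc0 {l a : ℝ} (hl : 0 ≤ l) (ha : 0 ≤ a) :
    l • Set.Icc (0:ℝ) a = Set.Icc 0 (l * a) := by
  rcases eq_or_lt_of_le hl with rfl | hl
  · rw [Set.zero_smul_set (Set.nonempty_Icc.2 ha), zero_mul, Set.Icc_self]
    rfl
  · rw [LinearOrderedField.smul_Icc hl]; simp only [smul_eq_mul, mul_zero]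

private lemma Icc0_add_Icc0 {a b : ℝ} (ha : 0 ≤ a) (hb : 0 ≤ b) :
    Set.Icc (0:ℝ) a + Set.Icc 0 b = Set.Icc 0 (a + b) := by
  ext x
  simp only [Set.mem_add, Set.mem_Icc]
  constructor
  · rintro ⟨y, ⟨hy0, hya⟩, z, ⟨hz0, hzb⟩, rfl⟩
    exact ⟨add_nonneg hy0 hz0, add_le_add hya hzb⟩
  · rintro ⟨hx0, hxab⟩
    refine ⟨min x a, ⟨le_min hx0 ha, min_le_right _ _⟩, x - min x a,
      ⟨sub_nonneg.2 (min_le_left _ _), ?_⟩, by ring⟩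
    rcases le_total x a with h | h
    · simp [min_eq_left h, hb]
    · rw [min_eq_right h]
      linarith

theorem gromov_question_negative_answer :
    ∃ (A₁ A₂ A₃ : Set (Fin 3 → ℝ)) (V : (Fin 3 → ℕ) → ℝ),
      A₁.Nonempty ∧ IsCompact A₁ ∧ Convex ℝ A₁ ∧
      A₂.Nonempty ∧ IsCompact A₂ ∧ Convex ℝ A₂ ∧
      A₃.Nonempty ∧ IsCompact A₃ ∧ Convex ℝ A₃ ∧
      (∀ I ∈ Finset.Nat.antidiagonalTuple 3 3, 0 ≤ V I) ∧
      (∀ l₁ l₂ l₃ : ℝ, 0 ≤ l₁ → 0 ≤ l₂ → 0 ≤ l₃ →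
        volume (l₁ • A₁ + l₂ • A₂ + l₃ • A₃) =
          ENNReal.ofReal (∑ I ∈ Finset.Nat.antidiagonalTuple 3 3,
            ((Nat.factorial 3 : ℝ) /
                ((Nat.factorial (I 0) : ℝ) * (Nat.factorial (I 1) : ℝ) *
                  (Nat.factorial (I 2) : ℝ))) *
              V I * l₁ ^ (I 0) * l₂ ^ (I 1) * l₃ ^ (I 2))) ∧
      V ![1, 1, 1] ^ 3 < V ![2, 1, 0] * V ![0, 2, 1] * V ![1, 0, 2] := by
  -- side vectors of the three boxes
  set u : Fin 3 → ℝ := ![1, 2, 0] with hu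
  set v : Fin 3 → ℝ := ![0, 1, 1] with hv
  set w : Fin 3 → ℝ := ![1, 0, 1] with hw
  -- monomial coefficients of (l₁+l₃)(2l₁+l₂)(l₂+l₃)
  set m : (Fin 3 → ℕ) → ℝ := fun I =>
    if I 0 = 2 ∧ I 1 = 1 ∧ I 2 = 0 then 2
    else if I 0 = 2 ∧ I 1 = 0 ∧ I 2 = 1 then 2
    else if I 0 = 1 ∧ I 1 = 2 ∧ I 2 = 0 then 1
    else if I 0 = 1 ∧ I 1 = 1 ∧ I 2 = 1 then 3
    else if I 0 = 1 ∧ I 1 = 0 ∧ I 2 = 2 then 2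
    else if I 0 = 0 ∧ I 1 = 2 ∧ I 2 = 1 then 1
    else if I 0 = 0 ∧ I 1 = 1 ∧ I 2 = 2 then 1
    else 0 with hm
  refine ⟨Set.pi Set.univ (fun i => Set.Icc 0 (u i)),
          Set.pi Set.univ (fun i => Set.Icc 0 (v i)),
          Set.pi Set.univ (fun i => Set.Icc 0 (w i)),
          fun I => ((Nat.factorial (I 0) : ℝ) * (Nat.factorial (I 1)) *
            (Nat.factorial (I 2))) / 6 * m I,
          ?_, ?_, ?_, ?_, ?_, ?_, ?_, ?_, ?_, ?_, ?_, ?_⟩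
  · exact Set.univ_pi_nonempty_iff.2 fun i => Set.nonempty_Icc.2 (by fin_cases i <;> norm_num [hu])
  · exact isCompact_univ_pi fun i => isCompact_Icc
  · exact convex_pi fun i _ => convex_Icc _ _
  · exact Set.univ_pi_nonempty_iff.2 fun i => Set.nonempty_Icc.2 (by fin_cases i <;> norm_num [hv])
  · exact isCompact_univ_pi fun i => isCompact_Icc
  · exact convex_pi fun i _ => convex_Icc _ _
  · exact Set.univ_pi_nonempty_iff.2 fun i => Set.nonempty_Icc.2 (by fin_cases i <;> norm_num [hw])
  · exact isCompact_univ_pi fun i => isCompact_Icc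
  · exact convex_pi fun i _ => convex_Icc _ _
  · intro I _
    apply mul_nonneg (by positivity)
    rw [hm]
    dsimp only
    split_ifs <;> norm_num
  · intro l₁ l₂ l₃ h₁ h₂ h₃
    have hun : ∀ i, (0:ℝ) ≤ u i := fun i => by fin_cases i <;> norm_num [hu]
    have hvn : ∀ i, (0:ℝ) ≤ v i := fun i => by fin_cases i <;> norm_num [hv]
    have hwn : ∀ i, (0:ℝ) ≤ w i := fun i => by fin_cases i <;> norm_num [hw]
    have key : l₁ • Set.pi Set.univ (fun i => Set.Icc (0:ℝ) (u i)) +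
        l₂ • Set.pi Set.univ (fun i => Set.Icc 0 (v i)) +
        l₃ • Set.pi Set.univ (fun i => Set.Icc 0 (w i)) =
        Set.pi Set.univ (fun i => Set.Icc 0 (l₁ * u i + l₂ * v i + l₃ * w i)) := by
      rw [smul_pi', smul_pi', smul_pi', pi_add_pi, pi_add_pi]
      apply congrArg (Set.pi Set.univ)
      funext i
      rw [smul_Icc0 h₁ (hun i), smul_Icc0 h₂ (hvn i), smul_Icc0 h₃ (hwn i),
        Icc0_add_Icc0 (mul_nonneg h₁ (hun i)) (mul_nonneg h₂ (hvn i)),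
        Icc0_add_Icc0 (add_nonneg (mul_nonneg h₁ (hun i)) (mul_nonneg h₂ (hvn i)))
          (mul_nonneg h₃ (hwn i))]
    have hnn : ∀ i, (0:ℝ) ≤ l₁ * u i + l₂ * v i + l₃ * w i := fun i =>
      add_nonneg (add_nonneg (mul_nonneg h₁ (hun i)) (mul_nonneg h₂ (hvn i)))
        (mul_nonneg h₃ (hwn i))
    rw [key, volume_pi_pi]
    simp only [Real.volume_Icc, sub_zero]
    rw [Fin.prod_univ_three, ← ENNReal.ofReal_mul (hnn 0),
      ← ENNReal.ofReal_mul (mul_nonneg (hnn 0) (hnn 1))]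
    congr 1
    rw [show Finset.Nat.antidiagonalTuple 3 3 =
      {![0,0,3], ![1,0,2], ![0,1,2], ![2,0,1], ![1,1,1], ![0,2,1], ![3,0,0], ![2,1,0], ![1,2,0],
        ![0,3,0]} from by decide]
    rw [Finset.sum_insert (by decide), Finset.sum_insert (by decide),
      Finset.sum_insert (by decide), Finset.sum_insert (by decide),
      Finset.sum_insert (by decide), Finset.sum_insert (by decide),
      Finset.sum_insert (by decide), Finset.sum_insert (by decide),
      Finset.sum_insert (by decide), Finset.sum_singleton]
    simp only [hm, hu, hv, hw, Matrix.cons_val_zero, Matrix.cons_val_one, Matrix.head_cons,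
      Matrix.cons_val_two, Matrix.tail_cons]
    norm_num [Nat.factorial]
    ring
  · simp only [hm, Matrix.cons_val_zero, Matrix.cons_val_one, Matrix.head_cons,
      Matrix.cons_val_two, Matrix.tail_cons]
    norm_num [Nat.factorial]
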